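/- Let ρ and ρ' be quantum states on a Hilbert space H_A and let Π be the orthogonal projection onto the support of ρ'. Then P(ρ,ρ') ≥ P(ρ, ΠρΠ/Tr(Πρ)); that is, among all states supported on the support of ρ', the renormalized projection of ρ is closest to ρ in purified distance. -/

import Mathlib

open Matrix Kronecker ComplexOrder

noncomputable section

variable {n : Type*} [Fintype n] [DecidableEq n]

/-- The PSD square root (old `Matrix.PosSemidef.sqrt`). -/
def posSemidefSqrt {A : Matrix n n ℂ} (hA : A.PosSemidef) : Matrix n n ℂ :=
  hA.1.eigenvectorUnitary.1 * diagonal ((↑) ∘ Real.sqrt ∘ hA.1.eigenvalues) *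
  (star hA.1.eigenvectorUnitary : Matrix n n ℂ)

open Classical in
/-- The square root of a matrix: the PSD square root if the matrix is PSD, else 0. -/
def msqrt (A : Matrix n n ℂ) : Matrix n n ℂ :=
  if h : A.PosSemidef then posSemidefSqrt h else 0

/-- The trace norm (Schatten 1-norm) of a matrix. -/
def trNorm (A : Matrix n n ℂ) : ℝ :=
  ((posSemidefSqrt (Matrix.posSemidef_conjTranspose_mul_self A)).trace).re

/-- The operator norm of a matrix, acting on the Euclidean space. -/
def opNorm (A : Matrix n n ℂ) : ℝ :=
  ‖(Matrix.toEuclideanCLM (𝕜 := ℂ) A : EuclideanSpace ℂ n →L[ℂ] EuclideanSpace ℂ n)‖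

/-- A (normalized) quantum state: positive semidefinite with unit trace. -/
def IsState (ρ : Matrix n n ℂ) : Prop := ρ.PosSemidef ∧ ρ.trace = 1

/-- A subnormalized quantum state: positive semidefinite with trace at most one. -/
def IsSubState (ρ : Matrix n n ℂ) : Prop := ρ.PosSemidef ∧ (ρ.trace).re ≤ 1

/-- Loewner (semidefinite) order: `A ≤ B` iff `B - A` is positive semidefinite. -/
def LoewnerLE (A B : Matrix n n ℂ) : Prop := (B - A).PosSemidef

/-- Fidelity `F(ρ,σ) = ‖√ρ√σ‖₁` (extended to positive operators). -/
def fid (ρ σ : Matrix n n ℂ) : ℝ := trNorm (msqrt ρ * msqrt σ)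

/-- Generalized fidelity for subnormalized states. -/
def gFid (ρ σ : Matrix n n ℂ) : ℝ :=
  fid ρ σ + Real.sqrt ((1 - ρ.trace.re) * (1 - σ.trace.re))

/-- (Generalized) purified distance `P(ρ,σ) = sqrt(1 - F(ρ,σ)²)`. -/
def pDist (ρ σ : Matrix n n ℂ) : ℝ := Real.sqrt (1 - (gFid ρ σ)^2)

/-- Generalized trace distance `δ(ρ,σ) = (‖ρ-σ‖₁ + |Tr(ρ-σ)|)/2` for subnormalized states. -/
def trDist (ρ σ : Matrix n n ℂ) : ℝ :=
  (trNorm (ρ - σ) + |(ρ.trace - σ.trace).re|) / 2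

variable {α β γ : Type*} [Fintype α] [DecidableEq α] [Fintype β] [DecidableEq β]
  [Fintype γ] [DecidableEq γ]

/-- Partial trace over the second tensor factor. -/
def ptrSnd (ρ : Matrix (α × β) (α × β) ℂ) : Matrix α α ℂ :=
  fun i j => ∑ k, ρ (i, k) (j, k)

/-- Partial trace over the first tensor factor. -/
def ptrFst (ρ : Matrix (α × β) (α × β) ℂ) : Matrix β β ℂ :=
  fun i j => ∑ k, ρ (k, i) (k, j)

/-- Partial trace over the middle factor of a tripartite system `(α × β) × γ`. -/
def ptrMid (ρ : Matrix ((α × β) × γ) ((α × β) × γ) ℂ) : Matrix (α × γ) (α × γ) ℂ :=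
  fun p q => ∑ m, ρ ((p.1, m), p.2) ((q.1, m), q.2)

/-- Max-relative entropy `D_max(ρ‖σ) = inf {λ : ρ ≤ 2^λ σ}`. -/
def Dmax (ρ σ : Matrix n n ℂ) : ℝ :=
  sInf {l : ℝ | LoewnerLE ρ (((2:ℝ) ^ l) • σ)}

open Classical in
/-- von Neumann entropy (base 2) of a matrix (0 if not Hermitian). -/
def vnEntropy (ρ : Matrix n n ℂ) : ℝ :=
  if h : ρ.IsHermitian then -∑ i, (h.eigenvalues i) * Real.logb 2 (h.eigenvalues i) else 0


open scoped MatrixOrder in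
lemma posSemidefSqrt_eq_cfc {A : Matrix n n ℂ} (hA : A.PosSemidef) :
    posSemidefSqrt hA = CFC.sqrt A := by
  rw [CFC.sqrt_eq_cfc, cfc_nnreal_eq_real _ A, hA.1.cfc_eq]
  simp only [IsHermitian.cfc, posSemidefSqrt, Unitary.conjStarAlgAut_apply]
  congr 3
  funext i
  simp only [Function.comp_apply, Real.coe_sqrt, Real.coe_toNNReal']
  rw [max_eq_left (hA.eigenvalues_nonneg i)]
  rfl

def Matrix.PosSemidef.sqrt {A : Matrix n n ℂ} (hA : A.PosSemidef) : Matrix n n ℂ :=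
  posSemidefSqrt hA

open scoped MatrixOrder in
lemma Matrix.PosSemidef.posSemidef_sqrt {A : Matrix n n ℂ} (hA : A.PosSemidef) :
    hA.sqrt.PosSemidef := by
  rw [Matrix.PosSemidef.sqrt, posSemidefSqrt_eq_cfc, ← Matrix.nonneg_iff_posSemidef]
  exact CFC.sqrt_nonneg A

open scoped MatrixOrder in
lemma Matrix.PosSemidef.sqrt_mul_self {A : Matrix n n ℂ} (hA : A.PosSemidef) :
    hA.sqrt * hA.sqrt = A := by
  rw [Matrix.PosSemidef.sqrt, posSemidefSqrt_eq_cfc]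
  exact CFC.sqrt_mul_sqrt_self A hA.nonneg

open scoped MatrixOrder in
lemma Matrix.PosSemidef.eq_sqrt_of_sq_eq {A B : Matrix n n ℂ} (hA : A.PosSemidef)
    (hB : B.PosSemidef) (hAB : A ^ 2 = B) : A = posSemidefSqrt hB := by
  rw [posSemidefSqrt_eq_cfc, ← hAB]
  exact (CFC.sqrt_sq A hA.nonneg).symm


set_option linter.unusedSectionVars false in
lemma trace_ctmul (B : Matrix n n ℂ) :
    (Bᴴ * B).trace = ((∑ j, ∑ i, Complex.normSq (B i j) : ℝ) : ℂ) := by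
  simp only [Matrix.trace, Matrix.diag, Matrix.mul_apply, Matrix.conjTranspose_apply]
  push_cast
  congr 1; ext j; congr 1; ext i
  rw [Complex.normSq_eq_conj_mul_self]; rfl

lemma trace_ctmul_re_nonneg (B : Matrix n n ℂ) : 0 ≤ (Bᴴ * B).trace.re := by
  rw [trace_ctmul]; simp only [Complex.ofReal_re]
  apply Finset.sum_nonneg; intro j _; apply Finset.sum_nonneg; intro i _
  exact Complex.normSq_nonneg _

lemma psd_trace_ofReal {A : Matrix n n ℂ} (hA : A.PosSemidef) :
    A.trace = (A.trace.re : ℂ) ∧ 0 ≤ A.trace.re := by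
  have h1 : hA.sqrtᴴ * hA.sqrt = A := by
    rw [hA.posSemidef_sqrt.1, hA.sqrt_mul_self]
  constructor
  · rw [← h1, trace_ctmul]; simp
  · rw [← h1]; exact trace_ctmul_re_nonneg _

set_option linter.unusedSectionVars false in
lemma rsmul_eq (r : ℝ) (X : Matrix n n ℂ) : r • X = (r : ℂ) • X := by
  ext i j; simp [Complex.real_smul]

lemma psd_rsmul {A : Matrix n n ℂ} (hA : A.PosSemidef) {r : ℝ} (hr : 0 ≤ r) :
    (r • A).PosSemidef := by
  rw [rsmul_eq]
  constructor
  · unfold Matrix.IsHermitian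
    rw [Matrix.conjTranspose_smul, hA.1.eq, Complex.star_def, Complex.conj_ofReal]
  · intro x
    have := hA.2 x
    exact (hA.smul (Complex.zero_le_real.2 hr)).2 x

set_option linter.unusedSectionVars false in
lemma hs_cs (X Y : Matrix n n ℂ) :
    ((Xᴴ * Y).trace).re ≤ Real.sqrt ((Xᴴ * X).trace.re) * Real.sqrt ((Yᴴ * Y).trace.re) := by
  have h1 : ((Xᴴ * Y).trace).re = ∑ j, ∑ i, ((starRingEnd ℂ) (X i j) * Y i j).re := by
    simp only [Matrix.trace, Matrix.diag, Matrix.mul_apply, Matrix.conjTranspose_apply,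
      Complex.re_sum]
    rfl
  have h2 : ((Xᴴ * Y).trace).re ≤ ∑ j, ∑ i, ‖X i j‖ * ‖Y i j‖ := by
    rw [h1]
    refine Finset.sum_le_sum fun j _ => Finset.sum_le_sum fun i _ => ?_
    calc ((starRingEnd ℂ) (X i j) * Y i j).re ≤ ‖(starRingEnd ℂ) (X i j) * Y i j‖ :=
          Complex.re_le_norm _
      _ = ‖X i j‖ * ‖Y i j‖ := by
          rw [norm_mul, Complex.norm_conj]
  refine h2.trans ?_
  have h3 : (∑ j, ∑ i, ‖X i j‖ * ‖Y i j‖) ^ 2 ≤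
      (∑ j, ∑ i, ‖X i j‖ ^ 2) * (∑ j, ∑ i, ‖Y i j‖ ^ 2) := by
    classical
    have := Finset.sum_mul_sq_le_sq_mul_sq (Finset.univ : Finset (n × n))
      (fun p => ‖X p.2 p.1‖) (fun p => ‖Y p.2 p.1‖)
    simpa [← Finset.univ_product_univ, Finset.sum_product] using this
  have hx : (Xᴴ * X).trace.re = ∑ j, ∑ i, ‖X i j‖ ^ 2 := by
    rw [trace_ctmul]; simp [Complex.sq_norm]
  have hy : (Yᴴ * Y).trace.re = ∑ j, ∑ i, ‖Y i j‖ ^ 2 := by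
    rw [trace_ctmul]; simp [Complex.sq_norm]
  rw [hx, hy, ← Real.sqrt_mul (by positivity)]
  set S := ∑ j, ∑ i, ‖X i j‖ * ‖Y i j‖ with hS
  have hS0 : 0 ≤ S := by positivity
  calc S = Real.sqrt (S ^ 2) := by rw [Real.sqrt_sq hS0]
    _ ≤ _ := Real.sqrt_le_sqrt h3

lemma trNorm_mul_le (C B : Matrix n n ℂ) :
    trNorm (C * B) ≤ Real.sqrt ((C * Cᴴ).trace.re) * Real.sqrt ((Bᴴ * B).trace.re) := by
  set M := C * B with hM
  have hMM : (Mᴴ * M).PosSemidef := posSemidef_conjTranspose_mul_self M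
  set hH := hMM.1 with hHdef
  set U : Matrix n n ℂ := (hH.eigenvectorUnitary : Matrix n n ℂ) with hU
  set lam : n → ℝ := hH.eigenvalues with hlamdef
  have hlam : ∀ i, 0 ≤ lam i := hMM.eigenvalues_nonneg
  have hUmem := hH.eigenvectorUnitary.2
  rw [Unitary.mem_iff] at hUmem
  have hUU : Uᴴ * U = 1 := by
    rw [← Matrix.star_eq_conjTranspose]; exact hUmem.1
  have hUU' : U * Uᴴ = 1 := by
    rw [← Matrix.star_eq_conjTranspose]; exact hUmem.2
  have hdiag : Uᴴ * (Mᴴ * M) * U = diagonal (fun i => (lam i : ℂ)) := by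
    rw [← Matrix.star_eq_conjTranspose]
    have := hH.conjStarAlgAut_star_eigenvectorUnitary
    rw [Unitary.conjStarAlgAut_star_apply] at this
    exact this
  -- trNorm M = ∑ √λᵢ
  have hsqrt : posSemidefSqrt hMM = U * diagonal (fun i => ((Real.sqrt (lam i) : ℝ) : ℂ)) * Uᴴ := rfl
  have htr : trNorm M = ∑ i, Real.sqrt (lam i) := by
    rw [trNorm]
    rw [hsqrt, Matrix.trace_mul_cycle, hUU, Matrix.one_mul, Matrix.trace_diagonal]
    simp [Complex.re_sum]
  -- the partial isometry V
  set g : n → ℝ := fun i => if 0 < lam i then (Real.sqrt (lam i))⁻¹ else 0 with hg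
  set D' : Matrix n n ℂ := diagonal (fun i => (g i : ℂ)) with hD'
  set V : Matrix n n ℂ := M * U * D' with hV
  have hD'herm : D'ᴴ = D' := by
    rw [hD', Matrix.diagonal_conjTranspose]
    apply congrArg diagonal; funext i
    simp [Complex.star_def, Complex.conj_ofReal]
  have hVct : Vᴴ = D' * (Uᴴ * Mᴴ) := by
    rw [hV, Matrix.conjTranspose_mul, Matrix.conjTranspose_mul, hD'herm]
  have k1 : Vᴴ * (M * U) = diagonal (fun i => ((Real.sqrt (lam i) : ℝ) : ℂ)) := by
    rw [hVct, Matrix.mul_assoc, Matrix.mul_assoc, ← Matrix.mul_assoc Mᴴ M U,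
      ← Matrix.mul_assoc Uᴴ (Mᴴ * M) U, hdiag, Matrix.diagonal_mul_diagonal]
    apply congrArg diagonal; funext i
    have key : g i * lam i = Real.sqrt (lam i) := by
      by_cases h : 0 < lam i
      · have hs : Real.sqrt (lam i) ≠ 0 := by positivity
        simp only [hg, if_pos h]
        rw [← Real.mul_self_sqrt (hlam i)]
        field_simp
        rw [Real.sqrt_sq (Real.sqrt_nonneg _)]
      · have h0 : lam i = 0 := le_antisymm (not_lt.1 h) (hlam i)
        simp [hg, if_neg h, h0]
    calc (g i : ℂ) * (lam i : ℂ) = ((g i * lam i : ℝ) : ℂ) := by push_cast; ring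
      _ = _ := by rw [key]
  set e : n → ℂ := fun i => if 0 < lam i then (1:ℂ) else 0 with he
  have k2 : Vᴴ * V = diagonal e := by
    rw [hVct, hV]
    have h1 : D' * (Uᴴ * Mᴴ) * (M * U * D') = D' * (Uᴴ * (Mᴴ * M) * U) * D' := by
      simp only [Matrix.mul_assoc]
    rw [h1, hdiag, hD', Matrix.diagonal_mul_diagonal, Matrix.diagonal_mul_diagonal]
    apply congrArg diagonal; funext i
    by_cases h : 0 < lam i
    · have hs : Real.sqrt (lam i) ≠ 0 := by positivity
      have : g i * lam i * g i = 1 := by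
        simp only [hg, if_pos h]
        rw [← Real.mul_self_sqrt (hlam i)]
        field_simp
        rw [Real.sqrt_sq (Real.sqrt_nonneg _)]
      calc (g i : ℂ) * (lam i : ℂ) * (g i : ℂ) = ((g i * lam i * g i : ℝ) : ℂ) := by
            push_cast; ring
        _ = e i := by rw [this, he]; simp [if_pos h]
    · have h0 : lam i = 0 := le_antisymm (not_lt.1 h) (hlam i)
      simp [hg, he, if_neg h, h0]
  have k3 : V * diagonal e = V := by
    rw [hV, Matrix.mul_assoc, hD', Matrix.diagonal_mul_diagonal]
    congr 1
    apply congrArg diagonal; funext i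
    by_cases h : 0 < lam i
    · simp [he, if_pos h]
    · simp [hg, he, if_neg h]
  set P : Matrix n n ℂ := V * Vᴴ with hP
  have hPP : P * P = P := by
    have h1 : P * P = V * (Vᴴ * V) * Vᴴ := by rw [hP]; simp only [Matrix.mul_assoc]
    rw [h1, k2, k3]
  have k5 : (Vᴴ * (C * Cᴴ) * V).trace.re ≤ (C * Cᴴ).trace.re := by
    have cyc : (Vᴴ * (C * Cᴴ) * V).trace = (P * (C * Cᴴ)).trace := by
      rw [Matrix.trace_mul_cycle]
    have hQ : (1 - P) * (1 - P) = (1 - P) := by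
      rw [Matrix.sub_mul, Matrix.one_mul, Matrix.mul_sub, Matrix.mul_one, hPP]
      abel
    set Z : Matrix n n ℂ := Cᴴ * (1 - P) with hZ
    have hZZ : Zᴴ * Z = (1 - P) * (C * Cᴴ) * (1 - P) := by
      rw [hZ, Matrix.conjTranspose_mul, Matrix.conjTranspose_conjTranspose]
      have : (1 - P)ᴴ = (1 - P) := by
        rw [Matrix.conjTranspose_sub, Matrix.conjTranspose_one, hP,
          Matrix.conjTranspose_mul, Matrix.conjTranspose_conjTranspose]
      rw [this]
      simp only [Matrix.mul_assoc]
    have htrZ : (Zᴴ * Z).trace = ((C * Cᴴ).trace - (P * (C * Cᴴ)).trace) := by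
      rw [hZZ, Matrix.trace_mul_cycle, hQ, Matrix.sub_mul, Matrix.one_mul,
        Matrix.trace_sub]
    have h0 := trace_ctmul_re_nonneg Z
    rw [htrZ, Complex.sub_re] at h0
    rw [cyc]; linarith
  have k6 : (Uᴴ * (Bᴴ * B) * U).trace = (Bᴴ * B).trace := by
    rw [Matrix.trace_mul_cycle, ← Matrix.mul_assoc, hUU', Matrix.one_mul]
  -- assemble
  have hXY : (Cᴴ * V)ᴴ * (B * U) = Vᴴ * (M * U) := by
    rw [Matrix.conjTranspose_mul, Matrix.conjTranspose_conjTranspose, hM]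
    simp only [Matrix.mul_assoc]
  have hmain : trNorm M = ((Cᴴ * V)ᴴ * (B * U)).trace.re := by
    rw [hXY, k1, htr, Matrix.trace_diagonal]
    simp [Complex.re_sum]
  have hXX : (Cᴴ * V)ᴴ * (Cᴴ * V) = Vᴴ * (C * Cᴴ) * V := by
    rw [Matrix.conjTranspose_mul, Matrix.conjTranspose_conjTranspose]
    simp only [Matrix.mul_assoc]
  have hYY : (B * U)ᴴ * (B * U) = Uᴴ * (Bᴴ * B) * U := by
    rw [Matrix.conjTranspose_mul]
    simp only [Matrix.mul_assoc]
  calc trNorm M = ((Cᴴ * V)ᴴ * (B * U)).trace.re := hmain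
    _ ≤ Real.sqrt (((Cᴴ * V)ᴴ * (Cᴴ * V)).trace.re) *
        Real.sqrt (((B * U)ᴴ * (B * U)).trace.re) := hs_cs _ _
    _ = Real.sqrt ((Vᴴ * (C * Cᴴ) * V).trace.re) * Real.sqrt ((Bᴴ * B).trace.re) := by
        rw [hXX, hYY, k6]
    _ ≤ Real.sqrt ((C * Cᴴ).trace.re) * Real.sqrt ((Bᴴ * B).trace.re) :=
        mul_le_mul_of_nonneg_right (Real.sqrt_le_sqrt k5) (Real.sqrt_nonneg _)

lemma trNorm_eq_of_sq {X S : Matrix n n ℂ} (hS : S.PosSemidef) (h : Xᴴ * X = S ^ 2) :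
    trNorm X = S.trace.re := by
  have := hS.eq_sqrt_of_sq_eq (Matrix.posSemidef_conjTranspose_mul_self X) h.symm
  rw [trNorm, ← this]

lemma trNorm_nonneg (A : Matrix n n ℂ) : 0 ≤ trNorm A :=
  (psd_trace_ofReal (Matrix.posSemidef_conjTranspose_mul_self A).posSemidef_sqrt).2

set_option linter.unusedSectionVars false in
lemma ct_rsmul (r : ℝ) (X : Matrix n n ℂ) : (r • X)ᴴ = r • Xᴴ := by
  ext i j
  simp [Matrix.conjTranspose_apply, star_smul]

lemma range_sqrt {A : Matrix n n ℂ} (hA : A.PosSemidef) :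
    LinearMap.range hA.sqrt.mulVecLin = LinearMap.range A.mulVecLin := by
  set S := hA.sqrt with hSdef
  have hmul : A.mulVecLin = S.mulVecLin ∘ₗ S.mulVecLin := by
    rw [← Matrix.mulVecLin_mul, hA.sqrt_mul_self]
  have hle : LinearMap.range A.mulVecLin ≤ LinearMap.range S.mulVecLin := by
    rw [hmul]; exact LinearMap.range_comp_le_range _ _
  have hker : LinearMap.ker S.mulVecLin = LinearMap.ker A.mulVecLin := by
    ext v
    simp only [LinearMap.mem_ker, Matrix.mulVecLin_apply]
    constructor
    · intro h
      rw [← hA.sqrt_mul_self, ← Matrix.mulVec_mulVec, h, Matrix.mulVec_zero]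
    · intro h
      have h2 : star (S *ᵥ v) ⬝ᵥ (S *ᵥ v) = 0 := by
        rw [Matrix.star_mulVec, dotProduct_mulVec, Matrix.vecMul_vecMul,
          ← dotProduct_mulVec, hA.posSemidef_sqrt.1, hA.sqrt_mul_self, h,
          dotProduct_zero]
      exact dotProduct_star_self_eq_zero.mp h2
  have hfin : Module.finrank ℂ (LinearMap.range A.mulVecLin) =
      Module.finrank ℂ (LinearMap.range S.mulVecLin) := by
    have h1 := LinearMap.finrank_range_add_finrank_ker A.mulVecLin
    have h2 := LinearMap.finrank_range_add_finrank_ker S.mulVecLin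
    rw [← hker] at h1
    omega
  exact (Submodule.eq_of_le_of_finrank_eq hle hfin).symm

lemma proj_fix {Pj S : Matrix n n ℂ} (hproj : Pj * Pj = Pj)
    (hr : LinearMap.range S.mulVecLin ≤ LinearMap.range Pj.mulVecLin) : Pj * S = S := by
  have h : ∀ v, (Pj * S) *ᵥ v = S *ᵥ v := by
    intro v
    have hmem : S *ᵥ v ∈ LinearMap.range Pj.mulVecLin :=
      hr ⟨v, by rw [Matrix.mulVecLin_apply]⟩
    obtain ⟨w, hw⟩ := hmem
    rw [Matrix.mulVecLin_apply] at hw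
    rw [← Matrix.mulVec_mulVec, ← hw, Matrix.mulVec_mulVec, hproj, hw]
  ext i j
  have := congrFun (h (Pi.single j 1)) i
  simpa [Matrix.mulVec_single] using this

lemma msqrt_eq {A : Matrix n n ℂ} (h : A.PosSemidef) : msqrt A = h.sqrt := dif_pos h


/-- Let ρ, ρ' be states and Π the orthogonal projection onto the support
of ρ'. Then `P(ρ,ρ') ≥ P(ρ, ΠρΠ/Tr(Πρ))`. -/
theorem pDist_ge_pDist_projected {d : ℕ}
    (ρ ρ' Pj : Matrix (Fin d) (Fin d) ℂ) (hρ : IsState ρ) (hρ' : IsState ρ')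
    (hproj : Pj * Pj = Pj) (hherm : Pjᴴ = Pj)
    (hrange : LinearMap.range Pj.mulVecLin = LinearMap.range ρ'.mulVecLin)
    (hpos : 0 < ((Pj * ρ).trace).re) :
    pDist ρ ρ' ≥ pDist ρ ((((Pj * ρ).trace).re)⁻¹ • (Pj * ρ * Pj)) := by
  obtain ⟨hρp, hρtr⟩ := hρ
  obtain ⟨hρ'p, hρ'tr⟩ := hρ'
  set t : ℝ := ((Pj * ρ).trace).re with htdef
  set A : Matrix (Fin d) (Fin d) ℂ := Pj * ρ * Pj with hAdef
  have hA : A.PosSemidef := by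
    have := hρp.mul_mul_conjTranspose_same Pj
    rwa [hherm] at this
  have htrA : A.trace = (Pj * ρ).trace := by
    rw [hAdef, Matrix.trace_mul_cycle, hproj]
  have htreal : (Pj * ρ).trace = (t : ℂ) := by
    have h1 := (psd_trace_ofReal hA).1
    rw [htrA] at h1
    exact h1
  set σ : Matrix (Fin d) (Fin d) ℂ := t⁻¹ • A with hσdef
  have hσ : σ.PosSemidef := psd_rsmul hA (inv_nonneg.2 hpos.le)
  have hσtr : σ.trace = 1 := by
    rw [hσdef, Matrix.trace_smul, htrA, htreal, Complex.real_smul, ← Complex.ofReal_mul,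
      inv_mul_cancel₀ hpos.ne', Complex.ofReal_one]
  -- abbreviations for the square roots (facts only)
  have hSρH : hρp.sqrtᴴ = hρp.sqrt := hρp.posSemidef_sqrt.1
  have hSρSρ : hρp.sqrt * hρp.sqrt = ρ := hρp.sqrt_mul_self
  have hS'H : hρ'p.sqrtᴴ = hρ'p.sqrt := hρ'p.posSemidef_sqrt.1
  have hS'S' : hρ'p.sqrt * hρ'p.sqrt = ρ' := hρ'p.sqrt_mul_self
  have hS0H : hA.sqrtᴴ = hA.sqrt := hA.posSemidef_sqrt.1
  have hS0S0 : hA.sqrt * hA.sqrt = A := hA.sqrt_mul_self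
  -- hA.sqrt is supported on Pj
  have hS0P : hA.sqrt * Pj = hA.sqrt := by
    have h1Pct : (1 - Pj)ᴴ = 1 - Pj := by
      rw [Matrix.conjTranspose_sub, Matrix.conjTranspose_one, hherm]
    have hAP : A * (1 - Pj) = 0 := by
      rw [Matrix.mul_sub, Matrix.mul_one, sub_eq_zero, hAdef,
        Matrix.mul_assoc (Pj * ρ) Pj Pj, hproj]
    have hZ : (hA.sqrt * (1 - Pj))ᴴ * (hA.sqrt * (1 - Pj)) = 0 := by
      rw [Matrix.conjTranspose_mul, h1Pct, hS0H]
      calc (1 - Pj) * hA.sqrt * (hA.sqrt * (1 - Pj))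
          = (1 - Pj) * ((hA.sqrt * hA.sqrt) * (1 - Pj)) := by simp only [Matrix.mul_assoc]
        _ = 0 := by rw [hS0S0, hAP, Matrix.mul_zero]
    have := Matrix.conjTranspose_mul_self_eq_zero.mp hZ
    rw [Matrix.mul_sub, Matrix.mul_one, sub_eq_zero] at this
    exact this.symm
  have hPS0 : Pj * hA.sqrt = hA.sqrt := by
    have := congrArg Matrix.conjTranspose hS0P
    rwa [Matrix.conjTranspose_mul, hherm, hS0H] at this
  -- msqrt σ
  set r : ℝ := Real.sqrt t⁻¹ with hrdef
  have hr : 0 ≤ r := Real.sqrt_nonneg _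
  have hrr : r * r = t⁻¹ := Real.mul_self_sqrt (inv_nonneg.2 hpos.le)
  have hmsσ : msqrt σ = r • hA.sqrt := by
    rw [msqrt_eq hσ]
    refine ((psd_rsmul hA.posSemidef_sqrt hr).eq_sqrt_of_sq_eq hσ ?_).symm
    rw [pow_two, rsmul_eq, Matrix.smul_mul, Matrix.mul_smul, smul_smul,
      ← Complex.ofReal_mul, hrr, hS0S0, ← rsmul_eq]
  -- fidelity to σ is exactly √t
  have hXA : (hρp.sqrt * hA.sqrt)ᴴ * (hρp.sqrt * hA.sqrt) = A * A := by
    rw [Matrix.conjTranspose_mul, hS0H, hSρH]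
    calc hA.sqrt * hρp.sqrt * (hρp.sqrt * hA.sqrt)
        = hA.sqrt * (hρp.sqrt * hρp.sqrt) * hA.sqrt := by simp only [Matrix.mul_assoc]
      _ = hA.sqrt * ρ * hA.sqrt := by rw [hSρSρ]
      _ = (hA.sqrt * Pj) * ρ * (Pj * hA.sqrt) := by rw [hS0P, hPS0]
      _ = hA.sqrt * (Pj * ρ * Pj) * hA.sqrt := by simp only [Matrix.mul_assoc]
      _ = hA.sqrt * A * hA.sqrt := by rw [← hAdef]
      _ = A * A := by
          have h4 : hA.sqrt * A * hA.sqrt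
              = hA.sqrt * (hA.sqrt * hA.sqrt) * hA.sqrt := by rw [hS0S0]
          have h5 : hA.sqrt * (hA.sqrt * hA.sqrt) * hA.sqrt
              = (hA.sqrt * hA.sqrt) * (hA.sqrt * hA.sqrt) := by
            simp only [Matrix.mul_assoc]
          rw [h4, h5, hS0S0]
  have hfidσ : fid ρ σ = Real.sqrt t := by
    rw [fid, msqrt_eq hρp, hmsσ, Matrix.mul_smul]
    rw [trNorm_eq_of_sq (psd_rsmul hA hr) (by
      rw [ct_rsmul, pow_two, rsmul_eq r, rsmul_eq r, Matrix.smul_mul, Matrix.mul_smul,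
        Matrix.smul_mul, Matrix.mul_smul, smul_smul, smul_smul, hXA,
        ← Complex.ofReal_mul, ← rsmul_eq])]
    rw [Matrix.trace_smul, htrA, htreal, Complex.real_smul, ← Complex.ofReal_mul,
      Complex.ofReal_re, hrdef, Real.sqrt_inv]
    have h2 : (0:ℝ) < Real.sqrt t := Real.sqrt_pos.2 hpos
    rw [inv_mul_eq_div, div_eq_iff h2.ne']
    exact (Real.mul_self_sqrt hpos.le).symm
  -- fidelity to ρ' is at most √t
  have hPS' : Pj * hρ'p.sqrt = hρ'p.sqrt := by
    refine proj_fix hproj ?_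
    rw [range_sqrt hρ'p, ← hrange]
  have hfid' : fid ρ ρ' ≤ Real.sqrt t := by
    rw [fid, msqrt_eq hρp, msqrt_eq hρ'p, ← hPS', ← Matrix.mul_assoc]
    have h1 : ((hρp.sqrt * Pj) * (hρp.sqrt * Pj)ᴴ).trace = (t : ℂ) := by
      rw [Matrix.conjTranspose_mul, hherm, hSρH]
      calc (hρp.sqrt * Pj * (Pj * hρp.sqrt)).trace
          = (hρp.sqrt * ((Pj * Pj) * hρp.sqrt)).trace := by simp only [Matrix.mul_assoc]
        _ = (hρp.sqrt * (Pj * hρp.sqrt)).trace := by rw [hproj]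
        _ = (Pj * (hρp.sqrt * hρp.sqrt)).trace := by
            rw [Matrix.trace_mul_comm, Matrix.mul_assoc]
        _ = (t : ℂ) := by rw [hSρSρ, htreal]
    have h2 : (hρ'p.sqrtᴴ * hρ'p.sqrt).trace = 1 := by
      rw [hS'H, hS'S', hρ'tr]
    calc trNorm ((hρp.sqrt * Pj) * hρ'p.sqrt)
        ≤ Real.sqrt (((hρp.sqrt * Pj) * (hρp.sqrt * Pj)ᴴ).trace.re) *
          Real.sqrt ((hρ'p.sqrtᴴ * hρ'p.sqrt).trace.re) := trNorm_mul_le _ _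
      _ = Real.sqrt t := by
          rw [h1, h2, Complex.ofReal_re, Complex.one_re, Real.sqrt_one, mul_one]
  -- wrap up
  have hgρ' : gFid ρ ρ' = fid ρ ρ' := by
    rw [gFid, hρtr, hρ'tr]
    simp
  have hgσ : gFid ρ σ = Real.sqrt t := by
    rw [gFid, hρtr, hσtr, hfidσ]
    simp
  have hfidnn : 0 ≤ fid ρ ρ' := trNorm_nonneg _
  rw [ge_iff_le, pDist, pDist, hgσ, hgρ']
  apply Real.sqrt_le_sqrt
  have h3 : (fid ρ ρ') ^ 2 ≤ (Real.sqrt t) ^ 2 := by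
    apply pow_le_pow_left₀ hfidnn hfid'
  linarith
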